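/- Let A = S + g·hᵀ and B = S + g·kᵀ be real n×n matrices in companion form. Suppose Z is a real symmetric positive semidefinite n×n matrix and w ∈ ℝⁿ satisfy: (i) Π·S·Z·Π + Π·Z·Sᵀ·Π = 0; (ii) S·Z·g + Z·h + ⟨w, k−h⟩·w = 0; and (iii) Z − w·wᵀ is positive semidefinite. Then the matrices X' = Z − w·wᵀ and Y' = w·wᵀ are positive semidefinite and satisfy A·X' + X'·Aᵀ + B·Y' + Y'·Bᵀ = 0. -/

import Mathlib

open Matrix

/-- The `n × n` shift matrix `S` with `S_{i,i+1} = 1` and all other entries `0`. -/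
def Smat (n : ℕ) : Matrix (Fin n) (Fin n) ℝ :=
  Matrix.of fun i j => if (i : ℕ) + 1 = (j : ℕ) then 1 else 0

/-- The last standard basis vector `g` of `ℝⁿ`. -/
def gvec (n : ℕ) : Fin n → ℝ := fun i => if (i : ℕ) = n - 1 then 1 else 0

/-- `Π = I − g·gᵀ`, the orthogonal projection onto the orthogonal complement of `g`. -/
def Pimat (n : ℕ) : Matrix (Fin n) (Fin n) ℝ := 1 - vecMulVec (gvec n) (gvec n)

section Aux

variable {n : ℕ}

lemma mul_vecMulVec' (A : Matrix (Fin n) (Fin n) ℝ) (u v : Fin n → ℝ) :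
    A * vecMulVec u v = vecMulVec (A.mulVec u) v := by
  ext i j
  simp [Matrix.mul_apply, vecMulVec_apply, Matrix.mulVec, dotProduct,
    Finset.sum_mul, mul_assoc]

lemma vecMulVec_mul' (u v : Fin n → ℝ) (A : Matrix (Fin n) (Fin n) ℝ) :
    vecMulVec u v * A = vecMulVec u (Aᵀ.mulVec v) := by
  ext i j
  simp only [Matrix.mul_apply, vecMulVec_apply, Matrix.mulVec, dotProduct,
    Matrix.transpose_apply, Finset.mul_sum]
  exact Finset.sum_congr rfl fun m _ => by ring

lemma vecMulVec_mul_vecMulVec' (a b c d : Fin n → ℝ) :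
    vecMulVec a b * vecMulVec c d = (b ⬝ᵥ c) • vecMulVec a d := by
  ext i j
  simp only [Matrix.mul_apply, vecMulVec_apply, dotProduct, Matrix.smul_apply,
    Finset.sum_mul, smul_eq_mul, Finset.mul_sum]
  exact Finset.sum_congr rfl fun m _ => by ring

lemma transpose_vecMulVec' (u v : Fin n → ℝ) :
    (vecMulVec u v)ᵀ = vecMulVec v u := by
  ext i j
  simp [vecMulVec_apply, mul_comm]

lemma vecMulVec_add_left' (a b v : Fin n → ℝ) :
    vecMulVec (a + b) v = vecMulVec a v + vecMulVec b v := by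
  ext i j; simp [vecMulVec_apply, add_mul]

lemma vecMulVec_smul_left' (c : ℝ) (a v : Fin n → ℝ) :
    vecMulVec (c • a) v = c • vecMulVec a v := by
  ext i j; simp [vecMulVec_apply, mul_assoc]

lemma vecMulVec_zero_left' (v : Fin n → ℝ) :
    vecMulVec (0 : Fin n → ℝ) v = 0 := by
  ext i j; simp [vecMulVec_apply]

lemma Smat_transpose_mulVec_gvec (n : ℕ) : (Smat n)ᵀ.mulVec (gvec n) = 0 := by
  ext i
  simp only [Matrix.mulVec, dotProduct, Pi.zero_apply]
  apply Finset.sum_eq_zero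
  intro j _
  simp only [Smat, gvec, Matrix.transpose_apply, Matrix.of_apply]
  have hi := i.isLt
  have hj := j.isLt
  split_ifs with ha hb <;> first | (exfalso; omega) | ring

lemma vv_mul_Smat (n : ℕ) :
    vecMulVec (gvec n) (gvec n) * Smat n = 0 := by
  rw [vecMulVec_mul', Smat_transpose_mulVec_gvec]
  ext i j; simp [vecMulVec_apply]

lemma Smat_transpose_mul_vv (n : ℕ) :
    (Smat n)ᵀ * vecMulVec (gvec n) (gvec n) = 0 := by
  rw [mul_vecMulVec', Smat_transpose_mulVec_gvec, vecMulVec_zero_left']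

lemma posSemidef_vecMulVec' (w : Fin n → ℝ) : (vecMulVec w w).PosSemidef := by
  refine Matrix.PosSemidef.of_dotProduct_mulVec_nonneg ?_ ?_
  · ext i j
    simp [Matrix.conjTranspose_apply, vecMulVec_apply, mul_comm]
  · intro x
    have hmv : (vecMulVec w w).mulVec x = (w ⬝ᵥ x) • w := by
      ext i
      simp only [Matrix.mulVec, dotProduct, vecMulVec_apply, Pi.smul_apply,
        smul_eq_mul, Finset.sum_mul, Finset.mul_sum]
      exact Finset.sum_congr rfl fun m _ => by ring
    rw [hmv]
    have : star x ⬝ᵥ (w ⬝ᵥ x) • w = (w ⬝ᵥ x) * (w ⬝ᵥ x) := by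
      rw [dotProduct_smul, star_trivial, dotProduct_comm]
      simp [smul_eq_mul]
    rw [this]
    exact mul_self_nonneg _

end Aux

/-- If `Z ≥ 0` and `w` satisfy `Π·S·Z·Π + Π·Z·Sᵀ·Π = 0`, `S·Z·g + Z·h + ⟨w, k−h⟩·w = 0`,
and `Z − w·wᵀ ≥ 0`, then `X' = Z − w·wᵀ` and `Y' = w·wᵀ` are positive semidefinite and
solve `A·X' + X'·Aᵀ + B·Y' + Y'·Bᵀ = 0` where `A = S + g·hᵀ` and `B = S + g·kᵀ`. -/
theorem Z_w_solution_gives_XY {n : ℕ} (hn : 0 < n) (h k : Fin n → ℝ)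
    (Z : Matrix (Fin n) (Fin n) ℝ) (w : Fin n → ℝ)
    (hZ : Z.PosSemidef)
    (h1 : Pimat n * Smat n * Z * Pimat n + Pimat n * Z * (Smat n)ᵀ * Pimat n = 0)
    (h2 : (Smat n * Z).mulVec (gvec n) + Z.mulVec h + (w ⬝ᵥ (k - h)) • w = 0)
    (h3 : (Z - vecMulVec w w).PosSemidef) :
    (Z - vecMulVec w w).PosSemidef ∧ (vecMulVec w w).PosSemidef ∧
      (Smat n + vecMulVec (gvec n) h) * (Z - vecMulVec w w) +
        (Z - vecMulVec w w) * (Smat n + vecMulVec (gvec n) h)ᵀ +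
        (Smat n + vecMulVec (gvec n) k) * vecMulVec w w +
        vecMulVec w w * (Smat n + vecMulVec (gvec n) k)ᵀ = 0 := by
  refine ⟨h3, posSemidef_vecMulVec' w, ?_⟩
  set S := Smat n with hS
  set g := gvec n with hg
  set V : Matrix (Fin n) (Fin n) ℝ := vecMulVec g g with hV
  have hZt : Zᵀ = Z := by
    ext i j
    have := congrFun (congrFun hZ.isHermitian i) j
    simpa using this
  -- Π S = S and Sᵀ Π = Sᵀ
  have hPS : Pimat n * S = S := by
    rw [Pimat, sub_mul, one_mul, ← hg, ← hV, vv_mul_Smat, sub_zero]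
  have hSP : Sᵀ * Pimat n = Sᵀ := by
    rw [Pimat, mul_sub, mul_one, ← hg, ← hV, Smat_transpose_mul_vv, sub_zero]
  -- Key consequence of h1
  have E1 : S * Z + Z * Sᵀ - S * Z * V - V * Z * Sᵀ = 0 := by
    have k1 : S * Z * Pimat n + Pimat n * Z * Sᵀ = 0 := by
      have e1 : Pimat n * S * Z * Pimat n = S * Z * Pimat n := by rw [hPS]
      have e2 : Pimat n * Z * Sᵀ * Pimat n = Pimat n * Z * Sᵀ := by
        rw [mul_assoc, hSP]
      rw [e1, e2] at h1
      exact h1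
    have : S * Z * (1 - V) + (1 - V) * Z * Sᵀ = 0 := by
      calc S * Z * (1 - V) + (1 - V) * Z * Sᵀ
          = S * Z * Pimat n + Pimat n * Z * Sᵀ := by rw [hV, hg, Pimat]
        _ = 0 := k1
    calc S * Z + Z * Sᵀ - S * Z * V - V * Z * Sᵀ
        = S * Z * (1 - V) + (1 - V) * Z * Sᵀ := by noncomm_ring
      _ = 0 := this
  -- Key consequences of h2
  have hcc : w ⬝ᵥ (k - h) = w ⬝ᵥ k - w ⬝ᵥ h := by
    simp [dotProduct_sub]
  have E2 : S * Z * V + Z * vecMulVec h g + (w ⬝ᵥ k - w ⬝ᵥ h) • vecMulVec w g = 0 := by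
    have h2' : (S * Z).mulVec g + Z.mulVec h + (w ⬝ᵥ k - w ⬝ᵥ h) • w = 0 := by
      rw [← hcc]; exact h2
    have := congrArg (fun v => vecMulVec v g) h2'
    simp only [vecMulVec_add_left', vecMulVec_smul_left', vecMulVec_zero_left'] at this
    rw [← mul_vecMulVec', ← mul_vecMulVec', ← hV] at this
    exact this
  have E3 : V * Z * Sᵀ + vecMulVec g h * Z + (w ⬝ᵥ k - w ⬝ᵥ h) • vecMulVec g w = 0 := by
    have hVt : Vᵀ = V := by rw [hV, transpose_vecMulVec']
    have := congrArg Matrix.transpose E2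
    simp only [Matrix.transpose_add, Matrix.transpose_smul, Matrix.transpose_mul,
      Matrix.transpose_zero, transpose_vecMulVec', hZt, hVt] at this
    rw [← mul_assoc] at this
    exact this
  -- cross terms
  set W : Matrix (Fin n) (Fin n) ℝ := vecMulVec w w with hW
  have E4 : vecMulVec g h * W = (w ⬝ᵥ h) • vecMulVec g w := by
    rw [hW, vecMulVec_mul_vecMulVec', dotProduct_comm]
  have E5 : vecMulVec g k * W = (w ⬝ᵥ k) • vecMulVec g w := by
    rw [hW, vecMulVec_mul_vecMulVec', dotProduct_comm]
  have E6 : W * vecMulVec h g = (w ⬝ᵥ h) • vecMulVec w g := by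
    rw [hW, vecMulVec_mul_vecMulVec']
  have E7 : W * vecMulVec k g = (w ⬝ᵥ k) • vecMulVec w g := by
    rw [hW, vecMulVec_mul_vecMulVec']
  simp only [Matrix.transpose_add, transpose_vecMulVec', add_mul, mul_add,
    sub_mul, mul_sub]
  rw [E4, E5, E6, E7]
  linear_combination (norm := module) E1 + E2 + E3
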